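/- Let q be a prime power, let α be a primitive element of the finite field F_q, and let ε : F_q^* → Z_{q−1} be the discrete logarithm to base α, i.e., ε(α^k) = k mod (q−1). Then for any two distinct elements a, b ∈ F_q, the set {ε(x−a) − ε(x−b) : x ∈ F_q \ {a, b}} equals Z_{q−1} \ {0}. -/

import Mathlib

theorem stmt11 {F : Type*} [Field F] [Fintype F] [DecidableEq F]
    (q : ℕ) (hq : Fintype.card F = q)
    (α : F) (hα : ∀ x : F, x ≠ 0 → ∃ k : ℕ, x = α ^ k)
    (ε : F → ZMod (q - 1)) (hε : ∀ k : ℕ, ε (α ^ k) = (k : ZMod (q - 1)))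
    (a b : F) (hab : a ≠ b) :
    {z : ZMod (q - 1) | ∃ x : F, x ≠ a ∧ x ≠ b ∧ z = ε (x - a) - ε (x - b)}
      = {z : ZMod (q - 1) | z ≠ 0} := by
  have h2 : 2 ≤ q := by rw [← hq]; exact Fintype.one_lt_card
  ext z
  simp only [Set.mem_setOf_eq]
  by_cases hq2 : q = 2
  · constructor
    · rintro ⟨x, hxa, hxb, -⟩
      exfalso
      have hcard : ({x, a, b} : Finset F).card ≤ Fintype.card F := Finset.card_le_univ _
      have : ({x, a, b} : Finset F).card = 3 := by
        rw [Finset.card_insert_of_notMem (by simp [hxa, hxb]),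
          Finset.card_insert_of_notMem (by simp [hab])]
        simp
      omega
    · intro hz
      exfalso
      apply hz
      haveI : NeZero (q - 1) := ⟨by omega⟩
      have hv : z.val < q - 1 := ZMod.val_lt z
      have hv0 : z.val = 0 := by omega
      have := (ZMod.natCast_rightInverse (n := q - 1) z)
      rw [← this, hv0]
      simp
  · -- main case q ≥ 3
    have h3 : 3 ≤ q := by omega
    haveI : NeZero (q - 1) := ⟨by omega⟩
    -- α ≠ 0
    have hα0 : α ≠ 0 := by
      intro h
      -- then every nonzero element is 1
      have hne : ∀ x : F, x ≠ 0 → x = 1 := by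
        intro x hx
        obtain ⟨k, hk⟩ := hα x hx
        rcases Nat.eq_zero_or_pos k with h0 | hpos
        · simp [h0] at hk; exact hk
        · rw [h, zero_pow hpos.ne'] at hk
          exact absurd hk hx
      have hsub : (Finset.univ : Finset F) ⊆ {0, 1} := by
        intro x _
        by_cases hx : x = 0
        · simp [hx]
        · simp [hne x hx]
      have : Fintype.card F ≤ ({0, 1} : Finset F).card := by
        rw [← Finset.card_univ]; exact Finset.card_le_card hsub
      have h21 : ({0, 1} : Finset F).card ≤ 2 :=
        (Finset.card_insert_le _ _).trans (by simp)
      omega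
    -- order of α
    set u : Fˣ := Units.mk0 α hα0 with hu
    have hord : orderOf u = q - 1 := by
      have : ∀ g : Fˣ, g ∈ Subgroup.zpowers u := by
        intro g
        obtain ⟨k, hk⟩ := hα g (Units.ne_zero g)
        refine ⟨(k : ℤ), ?_⟩
        show u ^ (k : ℤ) = g
        rw [zpow_natCast]
        ext
        rw [Units.val_pow_eq_pow_val, hu, Units.val_mk0, ← hk]
      rw [orderOf_eq_card_of_forall_mem_zpowers this, Nat.card_eq_fintype_card,
        Fintype.card_units, hq]
    have hpow : ∀ j k : ℕ, ((j : ZMod (q-1)) = (k : ZMod (q-1))) ↔ α ^ j = α ^ k := by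
      intro j k
      rw [ZMod.natCast_eq_natCast_iff]
      constructor
      · intro h
        have : u ^ j = u ^ k := by
          rw [pow_eq_pow_iff_modEq, hord]; exact h
        have := congrArg (Units.val) this
        simpa [hu] using this
      · intro h
        have : u ^ j = u ^ k := by
          ext; simpa [hu] using h
        rw [pow_eq_pow_iff_modEq, hord] at this
        exact this
    constructor
    · rintro ⟨x, hxa, hxb, hz⟩
      intro h0
      obtain ⟨j, hj⟩ := hα (x - a) (sub_ne_zero.mpr hxa)
      obtain ⟨k, hk⟩ := hα (x - b) (sub_ne_zero.mpr hxb)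
      rw [hj, hk, hε, hε] at hz
      rw [hz] at h0
      have : (j : ZMod (q-1)) = (k : ZMod (q-1)) := by
        have := sub_eq_zero.mp h0
        exact this
      rw [hpow] at this
      rw [← hj, ← hk] at this
      exact hab (by linear_combination -this)
    · intro hz
      set k := z.val with hkdef
      have hk : (k : ZMod (q-1)) = z := ZMod.natCast_rightInverse z
      set c := α ^ k with hc
      have hc1 : c ≠ 1 := by
        intro h
        have : α ^ k = α ^ 0 := by simpa using h
        rw [← hpow] at this
        simp at this
        exact hz (by rw [← hk, this])
      have hc0 : c ≠ 0 := pow_ne_zero _ hα0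
      have h1c : 1 - c ≠ 0 := sub_ne_zero.mpr (Ne.symm hc1)
      set x := (a - c * b) / (1 - c) with hx
      have hxb : x - b = (a - b) / (1 - c) := by
        rw [hx, eq_div_iff h1c, sub_mul, div_mul_cancel₀ _ h1c]
        ring
      have hxa : x - a = c * (x - b) := by
        rw [hxb]
        rw [hx, mul_div_assoc', eq_div_iff h1c, sub_mul, div_mul_cancel₀ _ h1c]
        ring
      have hxb0 : x - b ≠ 0 := by
        rw [hxb]
        exact div_ne_zero (sub_ne_zero.mpr hab) h1c
      have hxa0 : x - a ≠ 0 := by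
        rw [hxa]
        exact mul_ne_zero hc0 hxb0
      refine ⟨x, sub_ne_zero.mp hxa0, sub_ne_zero.mp hxb0, ?_⟩
      obtain ⟨j, hj⟩ := hα (x - b) hxb0
      have hja : x - a = α ^ (k + j) := by
        rw [pow_add, hxa, hj, hc]
      rw [hja, hj, hε, hε]
      push_cast
      rw [hk]
      ring
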